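/- Let H be a finite-dimensional Hopf algebra over a field k with bijective antipode S. Let t ∈ H be a nonzero left integral, let Λ : H → k be a linear functional with Λ(t₁)·t₂ = 1, and let g ∈ H be a grouplike element satisfying x₁·Λ(x₂) = Λ(x)·g for all x ∈ H. Then Δ(t) = S²(t₂)·g ⊗ t₁, i.e. the equality t₁ ⊗ t₂ = S²(t₂)·g ⊗ t₁ holds in H ⊗ H. -/

import Mathlib

/-!
Helper definitions for Sweedler-notation expressions in a Hopf algebra `H` over a field `k`.
-/

open TensorProduct

variable {k H : Type*} [Field k] [Ring H] [HopfAlgebra k H]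

/-- `swl f h = f(h₁) • h₂` in Sweedler notation. -/
noncomputable def swl (f : H →ₗ[k] k) : H →ₗ[k] H :=
  (TensorProduct.lid k H).toLinearMap ∘ₗ (f.rTensor H) ∘ₗ Coalgebra.comul

/-- `swr f h = f(h₂) • h₁` in Sweedler notation. -/
noncomputable def swr (f : H →ₗ[k] k) : H →ₗ[k] H :=
  (TensorProduct.rid k H).toLinearMap ∘ₗ (f.lTensor H) ∘ₗ Coalgebra.comul

/-- `sw2 f g h = f(h₁) * g(h₂)`, an element of `H`, in Sweedler notation. -/
noncomputable def sw2 (f g : H →ₗ[k] H) : H →ₗ[k] H :=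
  (LinearMap.mul' k H) ∘ₗ (TensorProduct.map f g) ∘ₗ Coalgebra.comul

/-- `sw2k f g h = f(h₁) * g(h₂)`, a scalar, in Sweedler notation. -/
noncomputable def sw2k (f g : H →ₗ[k] k) : H →ₗ[k] k :=
  (LinearMap.mul' k k) ∘ₗ (TensorProduct.map f g) ∘ₗ Coalgebra.comul

/-- `comul3 h = (h₁ ⊗ h₂) ⊗ h₃`, the iterated comultiplication `(Δ ⊗ id)Δ`. -/
noncomputable def comul3 : H →ₗ[k] (H ⊗[k] H) ⊗[k] H :=
  (LinearMap.rTensor H Coalgebra.comul) ∘ₗ Coalgebra.comul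

/-- `sw3 f g e h = f(h₁) * g(h₂) * e(h₃)`, an element of `H`, in Sweedler notation. -/
noncomputable def sw3 (f g e : H →ₗ[k] H) : H →ₗ[k] H :=
  (LinearMap.mul' k H) ∘ₗ
    (TensorProduct.map ((LinearMap.mul' k H) ∘ₗ TensorProduct.map f g) e) ∘ₗ comul3

local notation "S" => HopfAlgebra.antipode (R := k) (A := H)
local notation "Δ" => Coalgebra.comul (R := k) (A := H)
local notation "ε" => Coalgebra.counit (R := k) (A := H)

lemma repr_sum_counit_right {a : H} (r : Coalgebra.Repr k a (H × H)) :
    ∑ i ∈ r.index, ε (r.right i) • r.left i = a := by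
  have h := Coalgebra.sum_tmul_counit_eq r
  have h2 := congrArg (TensorProduct.rid k H) h
  rw [map_sum] at h2
  simp only [TensorProduct.rid_tmul] at h2
  simpa using h2


lemma antipode_one' : S (1 : H) = 1 := by
  have := HopfAlgebra.mul_antipode_rTensor_comul_apply (R := k) (1 : H)
  rw [Bialgebra.comul_one, Algebra.TensorProduct.one_def] at this
  simpa using this

lemma T_lemma {a : H} (r : Coalgebra.Repr k a (H × H)) (rr : ∀ i : r.ι, Coalgebra.Repr k (r.right i) (H × H)) :
    ∑ i ∈ r.index, ∑ p ∈ (rr i).index,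
      (S (r.left i) * (rr i).left p) ⊗ₜ[k] (rr i).right p = (1 : H) ⊗ₜ[k] a := by
  classical
  have step1 : ∑ i ∈ r.index, (r.left i) ⊗ₜ[k] (Δ (r.right i))
      = (Coalgebra.comul (R := k)).lTensor H (Δ a) := by
    rw [← r.eq, map_sum]; simp
  set Φ : H ⊗[k] (H ⊗[k] H) →ₗ[k] H ⊗[k] H :=
    (LinearMap.rTensor H ((LinearMap.mul' k H) ∘ₗ
      (HopfAlgebra.antipode (R := k)).rTensor H)) ∘ₗ
      (TensorProduct.assoc k H H H).symm.toLinearMap with hΦ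
  have key := congrArg Φ step1
  -- LHS computation
  have lhs : Φ (∑ i ∈ r.index, (r.left i) ⊗ₜ[k] (Δ (r.right i)))
      = ∑ i ∈ r.index, ∑ p ∈ (rr i).index,
        (S (r.left i) * (rr i).left p) ⊗ₜ[k] (rr i).right p := by
    rw [map_sum]
    refine Finset.sum_congr rfl fun i _ => ?_
    rw [← (rr i).eq, tmul_sum, map_sum]
    refine Finset.sum_congr rfl fun p _ => ?_
    simp [hΦ]
  -- RHS computation
  have rhs : Φ ((Coalgebra.comul (R := k)).lTensor H (Δ a)) = (1 : H) ⊗ₜ[k] a := by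
    rw [← Coalgebra.coassoc_apply, hΦ]
    simp only [LinearMap.comp_apply, LinearEquiv.coe_coe, LinearEquiv.symm_apply_apply]
    rw [← LinearMap.comp_apply, ← LinearMap.rTensor_comp, LinearMap.comp_assoc,
      HopfAlgebra.mul_antipode_rTensor_comul, LinearMap.rTensor_comp,
      LinearMap.comp_apply, Coalgebra.rTensor_counit_comul]
    simp
  rw [lhs, rhs] at key
  exact key


lemma antipode_mul' (a b : H) : S (a * b) = S b * S a := by
  classical
  set ra := Coalgebra.Repr.arbitrary k a with hra
  set rb := Coalgebra.Repr.arbitrary k b with hrb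
  set raa : ∀ i : ra.ι, Coalgebra.Repr k (ra.right i) (H × H) :=
    fun i => Coalgebra.Repr.arbitrary k (ra.right i) with hraa
  set rbb : ∀ j : rb.ι, Coalgebra.Repr k (rb.right j) (H × H) :=
    fun j => Coalgebra.Repr.arbitrary k (rb.right j) with hrbb
  set W : H := ∑ j ∈ rb.index, ∑ q ∈ (rbb j).index, ∑ i ∈ ra.index, ∑ p ∈ (raa i).index,
      ((S (rb.left j) * (S (ra.left i) * (raa i).left p)) * (rbb j).left q) *
        S ((raa i).right p * (rbb j).right q) with hW
  -- Claim 2 : W = S (a * b)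
  have claim2 : W = S (a * b) := by
    have inner2 : ∀ (j : rb.ι) (q : (rbb j).ι),
        ∑ i ∈ ra.index, ∑ p ∈ (raa i).index,
          ((S (rb.left j) * (S (ra.left i) * (raa i).left p)) * (rbb j).left q) *
            S ((raa i).right p * (rbb j).right q)
        = ((S (rb.left j) * 1) * (rbb j).left q) * S (a * (rbb j).right q) := by
      intro j q
      have key := congrArg
        ((LinearMap.mul' k H) ∘ₗ TensorProduct.map
          ((LinearMap.mulRight k ((rbb j).left q)) ∘ₗ (LinearMap.mulLeft k (S (rb.left j))))
          ((HopfAlgebra.antipode (R := k)) ∘ₗ (LinearMap.mulRight k ((rbb j).right q))))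
        (T_lemma ra raa)
      simpa [map_sum] using key
    rw [hW]
    calc ∑ j ∈ rb.index, ∑ q ∈ (rbb j).index, ∑ i ∈ ra.index, ∑ p ∈ (raa i).index,
          ((S (rb.left j) * (S (ra.left i) * (raa i).left p)) * (rbb j).left q) *
            S ((raa i).right p * (rbb j).right q)
        = ∑ j ∈ rb.index, ∑ q ∈ (rbb j).index,
            ((S (rb.left j) * 1) * (rbb j).left q) * S (a * (rbb j).right q) := by
          exact Finset.sum_congr rfl fun j _ => Finset.sum_congr rfl fun q _ => inner2 j q
      _ = ∑ j ∈ rb.index, ∑ q ∈ (rbb j).index,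
            (S (rb.left j) * (rbb j).left q) * S (a * (rbb j).right q) := by
          simp [mul_one]
      _ = S (a * b) := by
          have key := congrArg
            ((LinearMap.mul' k H) ∘ₗ TensorProduct.map
              (LinearMap.id (R := k) (M := H))
              ((HopfAlgebra.antipode (R := k)) ∘ₗ (LinearMap.mulLeft k a)))
            (T_lemma rb rbb)
          simpa [map_sum] using key
  -- Claim 1 : W = S b * S a
  have claim1 : W = S b * S a := by
    have tens : ∀ (i : ra.ι) (j : rb.ι),
        ∑ p ∈ (raa i).index, ∑ q ∈ (rbb j).index,
          ((raa i).left p * (rbb j).left q) ⊗ₜ[k] ((raa i).right p * (rbb j).right q)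
        = Δ (ra.right i * rb.right j) := by
      intro i j
      rw [Bialgebra.comul_mul, ← (raa i).eq, ← (rbb j).eq, Finset.sum_mul_sum]
      simp [Algebra.TensorProduct.tmul_mul_tmul]
    have inner1 : ∀ (i : ra.ι) (j : rb.ι),
        ∑ p ∈ (raa i).index, ∑ q ∈ (rbb j).index,
          ((raa i).left p * (rbb j).left q) * S ((raa i).right p * (rbb j).right q)
        = algebraMap k H (ε (ra.right i) * ε (rb.right j)) := by
      intro i j
      have key := congrArg
        ((LinearMap.mul' k H) ∘ₗ (HopfAlgebra.antipode (R := k) (A := H)).lTensor H)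
        (tens i j)
      simp only [map_sum, LinearMap.comp_apply, LinearMap.lTensor_tmul,
        LinearMap.mul'_apply] at key
      rw [key, HopfAlgebra.mul_antipode_lTensor_comul_apply, Bialgebra.counit_mul]
    rw [hW]
    calc ∑ j ∈ rb.index, ∑ q ∈ (rbb j).index, ∑ i ∈ ra.index, ∑ p ∈ (raa i).index,
          ((S (rb.left j) * (S (ra.left i) * (raa i).left p)) * (rbb j).left q) *
            S ((raa i).right p * (rbb j).right q)
        = ∑ j ∈ rb.index, ∑ i ∈ ra.index, ∑ p ∈ (raa i).index, ∑ q ∈ (rbb j).index,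
            (S (rb.left j) * S (ra.left i)) *
              (((raa i).left p * (rbb j).left q) * S ((raa i).right p * (rbb j).right q)) := by
          refine Finset.sum_congr rfl fun j _ => ?_
          rw [Finset.sum_comm]
          refine Finset.sum_congr rfl fun i _ => ?_
          rw [Finset.sum_comm]
          refine Finset.sum_congr rfl fun p _ => Finset.sum_congr rfl fun q _ => ?_
          simp [mul_assoc]
      _ = ∑ j ∈ rb.index, ∑ i ∈ ra.index,
            (S (rb.left j) * S (ra.left i)) * algebraMap k H (ε (ra.right i) * ε (rb.right j)) := by
          refine Finset.sum_congr rfl fun j _ => Finset.sum_congr rfl fun i _ => ?_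
          rw [← inner1 i j, Finset.mul_sum]
          exact Finset.sum_congr rfl fun p _ => (Finset.mul_sum _ _ _).symm
      _ = ∑ j ∈ rb.index, ∑ i ∈ ra.index,
            (ε (rb.right j) • S (rb.left j)) * (ε (ra.right i) • S (ra.left i)) := by
          refine Finset.sum_congr rfl fun j _ => Finset.sum_congr rfl fun i _ => ?_
          rw [← Algebra.commutes, ← Algebra.smul_def, mul_comm (ε (ra.right i)),
            mul_smul, smul_mul_assoc, mul_smul_comm]
      _ = (∑ j ∈ rb.index, ε (rb.right j) • S (rb.left j)) *
            (∑ i ∈ ra.index, ε (ra.right i) • S (ra.left i)) := by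
          rw [Finset.sum_mul_sum]
      _ = S b * S a := by
          simp only [← map_smul, ← map_sum]
          rw [repr_sum_counit_right, repr_sum_counit_right]
  rw [← claim2, claim1]


lemma L1_lemma {h : H} (r : Coalgebra.Repr k h (H × H)) :
    ∑ i ∈ r.index, ((S (r.left i)) ⊗ₜ[k] (1 : H)) * Δ (r.right i) = (1 : H) ⊗ₜ[k] h := by
  classical
  have : ∀ i : r.ι, ((S (r.left i)) ⊗ₜ[k] (1 : H)) * Δ (r.right i)
      = ∑ p ∈ (Coalgebra.Repr.arbitrary k (r.right i)).index,
          (S (r.left i) * (Coalgebra.Repr.arbitrary k (r.right i)).left p) ⊗ₜ[k]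
            (Coalgebra.Repr.arbitrary k (r.right i)).right p := by
    intro i
    rw [← (Coalgebra.Repr.arbitrary k (r.right i)).eq, Finset.mul_sum]
    exact Finset.sum_congr rfl fun p _ => by
      rw [Algebra.TensorProduct.tmul_mul_tmul, one_mul]
  rw [Finset.sum_congr rfl fun i _ => this i]
  exact T_lemma r _



lemma star_lemma (t : H) (htl : ∀ h : H, h * t = ε h • t) (h : H) :
    ((1 : H) ⊗ₜ[k] h) * Δ t = ((S h) ⊗ₜ[k] (1 : H)) * Δ t := by
  classical
  set r := Coalgebra.Repr.arbitrary k h with hr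
  have e1 : ∑ i ∈ r.index, ((S (r.left i)) ⊗ₜ[k] (1 : H)) * Δ (r.right i * t)
      = ((1 : H) ⊗ₜ[k] h) * Δ t := by
    calc ∑ i ∈ r.index, ((S (r.left i)) ⊗ₜ[k] (1 : H)) * Δ (r.right i * t)
        = ∑ i ∈ r.index, (((S (r.left i)) ⊗ₜ[k] (1 : H)) * Δ (r.right i)) * Δ t := by
          exact Finset.sum_congr rfl fun i _ => by rw [Bialgebra.comul_mul, mul_assoc]
      _ = (∑ i ∈ r.index, ((S (r.left i)) ⊗ₜ[k] (1 : H)) * Δ (r.right i)) * Δ t := by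
          rw [Finset.sum_mul]
      _ = ((1 : H) ⊗ₜ[k] h) * Δ t := by rw [L1_lemma r]
  have e2 : ∑ i ∈ r.index, ((S (r.left i)) ⊗ₜ[k] (1 : H)) * Δ (r.right i * t)
      = ((S h) ⊗ₜ[k] (1 : H)) * Δ t := by
    calc ∑ i ∈ r.index, ((S (r.left i)) ⊗ₜ[k] (1 : H)) * Δ (r.right i * t)
        = ∑ i ∈ r.index, ((ε (r.right i) • S (r.left i)) ⊗ₜ[k] (1 : H)) * Δ t := by
          refine Finset.sum_congr rfl fun i _ => ?_
          rw [htl, map_smul, mul_smul_comm, ← smul_mul_assoc, smul_tmul']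
      _ = ((∑ i ∈ r.index, ε (r.right i) • S (r.left i)) ⊗ₜ[k] (1 : H)) * Δ t := by
          rw [← Finset.sum_mul, ← sum_tmul]
      _ = ((S h) ⊗ₜ[k] (1 : H)) * Δ t := by
          simp only [← map_smul, ← map_sum]
          rw [repr_sum_counit_right r]
  rw [← e1, e2]


lemma sep_lemma [FiniteDimensional k H] (z : H ⊗[k] H)
    (hz : ∀ μ : Module.Dual k H, (TensorProduct.lid k H) (μ.rTensor H z) = 0) : z = 0 := by
  classical
  set B := Module.finBasis k H with hB
  set Ψ : H ⊗[k] H →ₗ[k] H ⊗[k] H :=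
    ∑ i, (TensorProduct.mk k H H (B i)) ∘ₗ (TensorProduct.lid k H).toLinearMap ∘ₗ
      (B.coord i).rTensor H with hΨ
  have hid : Ψ = LinearMap.id := by
    apply TensorProduct.ext'
    intro x y
    simp only [hΨ, LinearMap.sum_apply, LinearMap.comp_apply, LinearMap.rTensor_tmul,
      LinearEquiv.coe_coe, TensorProduct.lid_tmul, TensorProduct.mk_apply, LinearMap.id_apply]
    calc ∑ i, (B i) ⊗ₜ[k] ((B.coord i) x • y)
        = ∑ i, ((B.coord i) x • B i) ⊗ₜ[k] y := by
          exact Finset.sum_congr rfl fun i _ => by rw [tmul_smul, smul_tmul']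
      _ = x ⊗ₜ[k] y := by rw [← sum_tmul]; congr 1; simpa [Module.Basis.coord_apply] using B.sum_repr x
  have : Ψ z = z := by rw [hid]; rfl
  rw [← this, hΨ]
  simp only [LinearMap.sum_apply, LinearMap.comp_apply, LinearEquiv.coe_coe]
  refine Finset.sum_eq_zero fun i _ => ?_
  rw [hz (B.coord i)]
  simp


/-- `H` finite-dimensional Hopf algebra over `k` with bijective antipode
`S`, `t ≠ 0` a left integral, `Λ : H → k` with `Λ(t₁)·t₂ = 1`, and `g` grouplike with
`x₁·Λ(x₂) = Λ(x)·g` for all `x`.  Then `t₁ ⊗ t₂ = S²(t₂)·g ⊗ t₁` in `H ⊗ H`. -/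
theorem statement2 [FiniteDimensional k H]
    (hS : Function.Bijective ⇑(HopfAlgebra.antipode (R := k) (A := H)))
    (t : H) (ht0 : t ≠ 0)
    (htl : ∀ h : H, h * t = Coalgebra.counit (R := k) h • t)
    (Λ : H →ₗ[k] k) (hΛ : swl Λ t = 1)
    (g : H) (hg : Coalgebra.comul (R := k) g = g ⊗ₜ[k] g)
    (hgε : Coalgebra.counit (R := k) g = 1)
    (hgΛ : ∀ x : H, swr Λ x = Λ x • g) :
    Coalgebra.comul (R := k) t =
      (TensorProduct.map
        ((LinearMap.mulRight k g) ∘ₗ (HopfAlgebra.antipode (R := k)) ∘ₗ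
          (HopfAlgebra.antipode (R := k)))
        LinearMap.id)
      ((TensorProduct.comm k H H) (Coalgebra.comul (R := k) t)) := by
  classical
  set σ : H ≃ₗ[k] H := LinearEquiv.ofBijective _ hS with hσ
  have hσap : ∀ x : H, σ x = S x := fun x => rfl
  have hσS : ∀ x : H, S (σ.symm x) = x := fun x => by
    rw [← hσap, σ.apply_symm_apply]
  have hσsymm1 : σ.symm (1 : H) = 1 := by
    rw [LinearEquiv.symm_apply_eq, hσap, antipode_one']
  set rt := Coalgebra.Repr.arbitrary k t with hrt
  -- star expanded
  have starExp : ∀ h : H, ∑ i ∈ rt.index, rt.left i ⊗ₜ[k] (h * rt.right i)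
      = ∑ i ∈ rt.index, (S h * rt.left i) ⊗ₜ[k] rt.right i := by
    intro h
    have hst := star_lemma t htl h
    rw [← rt.eq, Finset.mul_sum, Finset.mul_sum] at hst
    simp only [Algebra.TensorProduct.tmul_mul_tmul] at hst
    simp only [one_mul, mul_one] at hst
    exact hst
  -- swl at t
  have hswl : ∑ i ∈ rt.index, Λ (rt.left i) • rt.right i = 1 := by
    have : swl Λ t = ∑ i ∈ rt.index, Λ (rt.left i) • rt.right i := by
      rw [swl]
      simp only [LinearMap.comp_apply, ← rt.eq, map_sum]
      simp
    rw [← this, hΛ]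
  have hswr : ∑ i ∈ rt.index, Λ (rt.right i) • rt.left i = Λ t • g := by
    have : swr Λ t = ∑ i ∈ rt.index, Λ (rt.right i) • rt.left i := by
      rw [swr]
      simp only [LinearMap.comp_apply, ← rt.eq, map_sum]
      simp
    rw [← this, hgΛ]
  have hΛt : Λ t = 1 := by
    have h1 := congrArg ε hswl
    rw [map_sum] at h1
    simp only [map_smul, smul_eq_mul] at h1
    rw [Bialgebra.counit_one] at h1
    calc Λ t = Λ (∑ i ∈ rt.index, ε (rt.right i) • rt.left i) := by
          rw [repr_sum_counit_right rt]
      _ = 1 := by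
          rw [map_sum] at *
          simp only [map_smul, smul_eq_mul] at *
          rw [← h1]
          exact Finset.sum_congr rfl fun i _ => mul_comm _ _
  -- (2)
  have h2 : ∀ h : H, ∑ i ∈ rt.index, Λ (h * rt.left i) • rt.right i = σ.symm h := by
    have A1 : ∀ h : H, ∑ i ∈ rt.index, Λ (S h * rt.left i) • rt.right i = h := by
      intro h
      have key := congrArg ((TensorProduct.lid k H).toLinearMap ∘ₗ Λ.rTensor H) (starExp h)
      simp only [map_sum, LinearMap.comp_apply, LinearMap.rTensor_tmul, LinearEquiv.coe_coe,
        TensorProduct.lid_tmul] at key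
      rw [← key]
      calc ∑ i ∈ rt.index, Λ (rt.left i) • (h * rt.right i)
          = h * ∑ i ∈ rt.index, Λ (rt.left i) • rt.right i := by
            rw [Finset.mul_sum]
            exact Finset.sum_congr rfl fun i _ => (mul_smul_comm _ _ _).symm
        _ = h := by rw [hswl, mul_one]
    intro h
    have := A1 (σ.symm h)
    rwa [hσS] at this
  -- (F)
  have hF : ∀ h : H, ∑ i ∈ rt.index, Λ (h * rt.right i) • rt.left i = S h * g := by
    intro h
    have key := congrArg ((TensorProduct.rid k H).toLinearMap ∘ₗ Λ.lTensor H) (starExp h)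
    simp only [map_sum, LinearMap.comp_apply, LinearMap.lTensor_tmul, LinearEquiv.coe_coe,
      TensorProduct.rid_tmul] at key
    rw [key]
    calc ∑ i ∈ rt.index, Λ (rt.right i) • (S h * rt.left i)
        = S h * ∑ i ∈ rt.index, Λ (rt.right i) • rt.left i := by
          rw [Finset.mul_sum]
          exact Finset.sum_congr rfl fun i _ => (mul_smul_comm _ _ _).symm
      _ = S h * g := by rw [hswr, hΛt, one_smul]
  -- pairing
  have hP : ∀ h n : H, Λ (n * (S h * g)) = Λ (h * σ.symm n) := by
    intro h n
    have k1 := congrArg (Λ ∘ₗ LinearMap.mulLeft k n) (hF h)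
    have k2 := congrArg (Λ ∘ₗ LinearMap.mulLeft k h) (h2 n)
    simp only [map_sum, LinearMap.comp_apply, map_smul, LinearMap.mulLeft_apply,
      smul_eq_mul] at k1 k2
    rw [← k1, ← k2]
    exact Finset.sum_congr rfl fun i _ => mul_comm _ _
  -- (U)
  have hU : ∀ x : H, Λ x = Λ (S x * g) := by
    intro x
    have := hP x 1
    rw [one_mul, hσsymm1, mul_one] at this
    exact this.symm
  -- S g * g = 1
  have hGg : S g * g = 1 := by
    have := HopfAlgebra.mul_antipode_rTensor_comul_apply (R := k) g
    rw [hg, hgε] at this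
    simpa using this
  -- Λ (g * y) = Λ (S y)
  have hGS : ∀ y : H, Λ (g * y) = Λ (S y) := by
    intro y
    rw [hU (g * y), antipode_mul', mul_assoc, hGg, mul_one]
  have hT : ∀ y : H, Λ (g * y) = Λ (S (S y) * g) := fun y => (hGS y).trans (hU (S y))
  -- (E)
  have hE : ∀ h : H, ∑ i ∈ rt.index, Λ (h * (S (S (rt.right i)) * g)) • rt.left i
      = σ.symm h := by
    intro h
    have key : ∀ x : H, Λ (h * (S (S x) * g)) = Λ ((g * σ.symm (σ.symm h)) * x) := by
      intro x
      rw [mul_assoc, hT (σ.symm (σ.symm h) * x), antipode_mul', hσS, antipode_mul', hσS,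
        mul_assoc, ← mul_assoc]
    calc ∑ i ∈ rt.index, Λ (h * (S (S (rt.right i)) * g)) • rt.left i
        = ∑ i ∈ rt.index, Λ ((g * σ.symm (σ.symm h)) * rt.right i) • rt.left i := by
          exact Finset.sum_congr rfl fun i _ => by rw [key]
      _ = S (g * σ.symm (σ.symm h)) * g := hF _
      _ = σ.symm h := by
          rw [antipode_mul', hσS, mul_assoc, hGg, mul_one]
  -- surjectivity of h ↦ Λ (h * ·)
  have hsurj : ∀ μ : Module.Dual k H, ∃ h : H, ∀ x : H, μ x = Λ (h * x) := by
    set θ : H →ₗ[k] Module.Dual k H :=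
      (LinearMap.llcomp k H H k Λ) ∘ₗ (LinearMap.mul k H) with hθ
    have hθap : ∀ h x : H, θ h x = Λ (h * x) := fun h x => rfl
    have hinj : Function.Injective θ := by
      intro x y hxy
      have hz : ∀ w : H, Λ (x * w) = Λ (y * w) := fun w => by
        rw [← hθap, ← hθap, hxy]
      have := h2 x
      rw [Finset.sum_congr rfl fun i _ => by rw [hz (rt.left i)]] at this
      rw [h2 y] at this
      exact σ.symm.injective this.symm
    have hfr : Module.finrank k H = Module.finrank k (Module.Dual k H) :=
      Subspace.dual_finrank_eq.symm
    have hsur : Function.Surjective θ :=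
      (LinearMap.injective_iff_surjective_of_finrank_eq_finrank hfr).mp hinj
    intro μ
    obtain ⟨h, hh⟩ := hsur μ
    exact ⟨h, fun x => by rw [← hh, hθap]⟩
  -- final
  rw [← rt.eq]
  simp only [map_sum, TensorProduct.comm_tmul, TensorProduct.map_tmul, LinearMap.comp_apply,
    LinearMap.id_apply, LinearMap.mulRight_apply]
  rw [← sub_eq_zero]
  apply sep_lemma
  intro μ
  obtain ⟨h, hμ⟩ := hsurj μ
  simp only [map_sub, map_sum, LinearMap.rTensor_tmul, LinearEquiv.coe_coe,
    TensorProduct.lid_tmul, hμ]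
  rw [h2 h, hE h, sub_self]
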